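/- Let k ≥ 1 and n = 2k + 1. Then the radio number of C_n □ C_n satisfies rn(C_n □ C_n) ≥ ((n² − 1)/2)·(k + 1) + 1. -/

import Mathlib

open SimpleGraph

/-- `c` is a radio labeling of `G`: labels are positive integers and for every two
distinct vertices `u, v` we have `d(u,v) + |c(u) - c(v)| ≥ 1 + diam(G)`. -/
def IsRadioLabeling {V : Type*} (G : SimpleGraph V) (c : V → ℕ) : Prop :=
  (∀ v, 1 ≤ c v) ∧
    ∀ u v : V, u ≠ v → G.diam + 1 ≤ G.dist u v + Nat.dist (c u) (c v)

/-- The span of a labeling: the maximum label used. -/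
def labelSpan {V : Type*} [Fintype V] (c : V → ℕ) : ℕ := Finset.univ.sup c

/-- The radio number of `G`: the minimum span over all radio labelings. -/
noncomputable def radioNumber {V : Type*} [Fintype V] (G : SimpleGraph V) : ℕ :=
  sInf {s | ∃ c : V → ℕ, IsRadioLabeling G c ∧ labelSpan c = s}

namespace RadioAux

lemma fin_sub_val {n : ℕ} (a b : Fin n) :
    (a - b).val = if b.val ≤ a.val then a.val - b.val else a.val + n - b.val := by
  have ha := a.isLt; have hb := b.isLt
  rw [Fin.sub_def]
  split
  · next hle =>
      have h : n - b.val + a.val = (a.val - b.val) + n := by omega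
      simp only [h, Nat.add_mod_right, Nat.mod_eq_of_lt (show a.val - b.val < n by omega)]
  · next hlt =>
      simp only [Nat.mod_eq_of_lt (show n - b.val + a.val < n by omega)]
      omega

/-- cycle pseudo-distance -/
def cd {n : ℕ} (a b : Fin n) : ℕ := min (b - a).val (a - b).val

lemma cd_triple {n : ℕ} (a b c : Fin n) : cd a b + cd b c + cd c a ≤ n := by
  have ha := a.isLt; have hb := b.isLt; have hc := c.isLt
  simp only [cd, fin_sub_val]
  split_ifs <;> omega

lemma cd_self {n : ℕ} (a : Fin n) : cd a a = 0 := by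
  simp [cd, fin_sub_val]


lemma fin_one_val {n : ℕ} [NeZero n] (hn : 2 ≤ n) : (1 : Fin n).val = 1 := by
  obtain ⟨m, rfl⟩ : ∃ m, n = m + 2 := ⟨n - 2, by omega⟩
  rfl

lemma cycle_connected {n : ℕ} (hn : 2 ≤ n) : (cycleGraph n).Connected := by
  obtain ⟨m, rfl⟩ : ∃ m, n = m + 1 := ⟨n - 1, by omega⟩
  exact cycleGraph_connected

lemma cycle_dist_le_sub {n : ℕ} [NeZero n] (hn : 2 ≤ n) (a b : Fin n) :
    (cycleGraph n).dist a b ≤ (b - a).val := by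
  have hconn := cycle_connected hn
  generalize hm : (b - a).val = m
  induction m generalizing b with
  | zero =>
      have : b = a := by
        have : b - a = 0 := Fin.ext (by simpa using hm)
        have := sub_eq_zero.mp this
        exact this
      subst this
      simp
  | succ m ih =>
      have hadj : (cycleGraph n).Adj (b - 1) b := by
        rw [cycleGraph_adj']
        right
        rw [sub_sub_cancel]
        exact fin_one_val hn
      have hm' : (b - 1 - a).val = m := by
        have h1 : (1 : Fin n).val = 1 := fin_one_val hn
        rw [sub_right_comm]
        rw [fin_sub_val] at hm ⊢
        rw [fin_sub_val, h1]
        have ha := a.isLt; have hb := b.isLt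
        split_ifs at hm ⊢ <;> omega
      calc (cycleGraph n).dist a b
          ≤ (cycleGraph n).dist a (b - 1) + (cycleGraph n).dist (b - 1) b :=
            hconn.dist_triangle
        _ ≤ m + 1 := by
            have h2 : (cycleGraph n).dist (b - 1) b ≤ 1 := by
              simpa using dist_le hadj.toWalk
            have h3 := ih (b - 1) hm'
            omega

open Fin.CommRing in
lemma cycle_walk_int {n : ℕ} [NeZero n] (hn : 2 ≤ n) {a b : Fin n}
    (p : (cycleGraph n).Walk a b) :
    ∃ s : ℤ, ((s : Fin n) = b - a) ∧ s.natAbs ≤ p.length := by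
  induction p with
  | nil => exact ⟨0, by simp, by simp⟩
  | @cons a u b h q ih =>
      obtain ⟨s, hs, hl⟩ := ih
      have h1 : (1 : Fin n).val = 1 := fin_one_val hn
      rw [cycleGraph_adj'] at h
      have : u - a = 1 ∨ u - a = -1 := by
        rcases h with h | h
        · right
          have h2 : a - u = 1 := Fin.ext (by rw [h1]; exact h)
          rw [← h2]; ring
        · left
          exact Fin.ext (by rw [h1]; exact h)
      rcases this with h' | h'
      · refine ⟨s + 1, ?_, ?_⟩
        · push_cast
          rw [hs, ← h']
          ring
        · rw [Walk.length_cons]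
          omega
      · have h'' : a - u = 1 := by rw [← neg_sub, h', neg_neg]
        refine ⟨s - 1, ?_, ?_⟩
        · push_cast
          rw [hs, ← h'']
          ring
        · rw [Walk.length_cons]
          omega

open Fin.CommRing in
lemma cd_le_cycle_dist {n : ℕ} [NeZero n] (hn : 2 ≤ n) (a b : Fin n) :
    cd a b ≤ (cycleGraph n).dist a b := by
  obtain ⟨p, hp⟩ := ((cycle_connected hn) a b).exists_walk_length_eq_dist
  obtain ⟨s, hs, hl⟩ := cycle_walk_int hn p
  rw [← hp]
  rcases le_or_gt 0 s with h | h
  · have : (b - a).val ≤ s.natAbs := by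
      have h2 : ((s.toNat : ℕ) : Fin n) = b - a := by
        rw [← Int.cast_natCast (R := Fin n), Int.toNat_of_nonneg h, hs]
      have := congrArg Fin.val h2
      rw [Fin.val_natCast] at this
      rw [← this]
      calc s.toNat % n ≤ s.toNat := Nat.mod_le _ _
        _ = s.natAbs := by omega
    exact le_trans (le_trans (min_le_left _ _) this) hl
  · have hs' : (((-s).toNat : ℕ) : Fin n) = a - b := by
      have ht : (((-s).toNat : ℕ) : ℤ) = -s := Int.toNat_of_nonneg (by omega)
      rw [← Int.cast_natCast (R := Fin n), ht, Int.cast_neg, hs]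
      ring
    have : (a - b).val ≤ s.natAbs := by
      have := congrArg Fin.val hs'
      rw [Fin.val_natCast] at this
      rw [← this]
      calc (-s).toNat % n ≤ (-s).toNat := Nat.mod_le _ _
        _ = s.natAbs := by omega
    exact le_trans (le_trans (min_le_right _ _) this) hl

lemma cycle_dist_eq {n : ℕ} [NeZero n] (hn : 2 ≤ n) (a b : Fin n) :
    (cycleGraph n).dist a b = cd a b := by
  refine le_antisymm ?_ (cd_le_cycle_dist hn a b)
  refine le_min (cycle_dist_le_sub hn a b) ?_
  rw [SimpleGraph.dist_comm]
  exact cycle_dist_le_sub hn b a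


lemma le_boxProd_walk {α β : Type*} {G : SimpleGraph α} {H : SimpleGraph β}
    (hG : G.Connected) (hH : H.Connected) {x y : α × β} (p : (G □ H).Walk x y) :
    G.dist x.1 y.1 + H.dist x.2 y.2 ≤ p.length := by
  induction p with
  | nil => simp
  | @cons x w y h q ih =>
      rw [Walk.length_cons]
      rcases boxProd_adj.mp h with ⟨h1, h2⟩ | ⟨h1, h2⟩
      · have t := hG.dist_triangle (u := x.1) (v := w.1) (w := y.1)
        have hd : G.dist x.1 w.1 ≤ 1 := by simpa using dist_le h1.toWalk
        rw [h2]
        omega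
      · have t := hH.dist_triangle (u := x.2) (v := w.2) (w := y.2)
        have hd : H.dist x.2 w.2 ≤ 1 := by simpa using dist_le h1.toWalk
        rw [h2]
        omega

lemma boxProd_dist_le {α β : Type*} {G : SimpleGraph α} {H : SimpleGraph β}
    (hG : G.Connected) (hH : H.Connected) (x y : α × β) :
    (G □ H).dist x y ≤ G.dist x.1 y.1 + H.dist x.2 y.2 := by
  obtain ⟨p, hp⟩ := hG.exists_walk_length_eq_dist x.1 y.1
  obtain ⟨q, hq⟩ := hH.exists_walk_length_eq_dist x.2 y.2
  have hw := dist_le ((Walk.boxProdLeft (H := H) x.2 p).append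
    (Walk.boxProdRight (G := G) y.1 q))
  simp only [Walk.length_append, Walk.boxProdLeft, Walk.boxProdRight, Walk.length_map] at hw
  calc (G □ H).dist x y = (G □ H).dist (x.1, x.2) (y.1, y.2) := by simp
    _ ≤ p.length + q.length := by
        refine (dist_le ((Walk.boxProdLeft (H := H) x.2 p).append
          (Walk.boxProdRight (G := G) y.1 q))).trans (le_of_eq ?_)
        rw [Walk.length_append]
        exact congrArg₂ (· + ·) (Walk.length_map ..) (Walk.length_map ..)
    _ = _ := by rw [hp, hq]

lemma torus_dist {n : ℕ} [NeZero n] (hn : 2 ≤ n) (u v : Fin n × Fin n) :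
    (cycleGraph n □ cycleGraph n).dist u v = cd u.1 v.1 + cd u.2 v.2 := by
  have hc := cycle_connected hn
  refine le_antisymm ?_ ?_
  · calc (cycleGraph n □ cycleGraph n).dist u v
        ≤ (cycleGraph n).dist u.1 v.1 + (cycleGraph n).dist u.2 v.2 :=
          boxProd_dist_le hc hc u v
      _ = cd u.1 v.1 + cd u.2 v.2 := by rw [cycle_dist_eq hn, cycle_dist_eq hn]
  · obtain ⟨p, hp⟩ := ((hc.boxProd hc) u v).exists_walk_length_eq_dist
    have := le_boxProd_walk hc hc p
    rw [hp, cycle_dist_eq hn, cycle_dist_eq hn] at this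
    exact this

lemma torus_triple {n : ℕ} [NeZero n] (hn : 2 ≤ n) (u v w : Fin n × Fin n) :
    (cycleGraph n □ cycleGraph n).dist u v + (cycleGraph n □ cycleGraph n).dist v w
      + (cycleGraph n □ cycleGraph n).dist w u ≤ 2 * n := by
  rw [torus_dist hn, torus_dist hn, torus_dist hn]
  have h1 := cd_triple u.1 v.1 w.1
  have h2 := cd_triple u.2 v.2 w.2
  omega

end RadioAux


open RadioAux in
/-- for `n = 2k + 1`, `k ≥ 1`, `rn(C_n □ C_n) ≥ ((n² - 1)/2)(k + 1) + 1`. -/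
theorem radioNumber_odd_lower_bound (n k : ℕ) (hk : 1 ≤ k) (hn : n = 2 * k + 1) :
    (n ^ 2 - 1) / 2 * (k + 1) + 1 ≤ radioNumber (cycleGraph n □ cycleGraph n) := by
  have hn2 : 2 ≤ n := by omega
  haveI : NeZero n := ⟨by omega⟩
  have hc : (cycleGraph n).Connected := cycle_connected hn2
  have hconn : (cycleGraph n □ cycleGraph n).Connected := hc.boxProd hc
  haveI : Nonempty (Fin n) := ⟨⟨0, by omega⟩⟩
  have hediam : (cycleGraph n □ cycleGraph n).ediam ≠ ⊤ := by
    obtain ⟨u, v, huv⟩ := exists_edist_eq_ediam_of_finite (G := cycleGraph n □ cycleGraph n)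
    rw [← huv]
    exact edist_ne_top_iff_reachable.mpr (hconn u v)
  have hK : k < n := by omega
  have hDlow : 2 * k ≤ (cycleGraph n □ cycleGraph n).diam := by
    have hd : (cycleGraph n □ cycleGraph n).dist (⟨0, by omega⟩, ⟨0, by omega⟩)
        (⟨k, hK⟩, ⟨k, hK⟩) = 2 * k := by
      rw [torus_dist hn2]
      have h1 : cd (⟨0, by omega⟩ : Fin n) ⟨k, hK⟩ = k := by
        simp only [cd, fin_sub_val]
        norm_num
        split_ifs <;> omega
      rw [h1]
      omega
    rw [← hd]
    exact dist_le_diam hediam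
  have hNodd : n ^ 2 = 2 * (2 * k * k + 2 * k) + 1 := by subst hn; ring
  rw [radioNumber]
  apply le_csInf
  · classical
    set e0 := Fintype.equivFin (Fin n × Fin n) with he0
    set D := (cycleGraph n □ cycleGraph n).diam with hD
    refine ⟨_, fun v => 1 + (e0 v : ℕ) * (D + 1), ⟨fun v => Nat.le_add_right 1 _, ?_⟩, rfl⟩
    intro u v huv
    show D + 1 ≤ (cycleGraph n □ cycleGraph n).dist u v
      + Nat.dist (1 + (e0 u : ℕ) * (D + 1)) (1 + (e0 v : ℕ) * (D + 1))
    have hne' : (e0 u : ℕ) ≠ (e0 v : ℕ) := by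
      intro h
      exact huv (e0.injective (Fin.ext h))
    have h1 : 1 ≤ Nat.dist (e0 u : ℕ) (e0 v : ℕ) := by
      rcases Nat.eq_zero_or_pos (Nat.dist (e0 u : ℕ) (e0 v : ℕ)) with h | h
      · exact absurd (Nat.eq_of_dist_eq_zero h) hne'
      · exact h
    have h2 : D + 1 ≤ Nat.dist (1 + (e0 u : ℕ) * (D + 1)) (1 + (e0 v : ℕ) * (D + 1)) := by
      rw [add_comm 1 ((e0 u : ℕ) * (D + 1)), add_comm 1 ((e0 v : ℕ) * (D + 1)),
        Nat.dist_add_add_right, Nat.dist_mul_right]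
      calc D + 1 = 1 * (D + 1) := (one_mul _).symm
        _ ≤ _ := Nat.mul_le_mul_right _ h1
    omega
  · rintro s ⟨c, ⟨hc1, hc2⟩, rfl⟩
    have hinj : Function.Injective c := by
      intro u v h
      by_contra hne'
      have h2 := hc2 u v hne'
      have h3 : (cycleGraph n □ cycleGraph n).dist u v ≤ (cycleGraph n □ cycleGraph n).diam :=
        dist_le_diam hediam
      rw [h, Nat.dist_self] at h2
      omega
    have hcard : Fintype.card (Fin n × Fin n) = n ^ 2 := by simp [sq]
    classical
    set S : Finset ℕ := Finset.univ.image c with hS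
    have hscard : S.card = n ^ 2 := by
      rw [hS, Finset.card_image_of_injective _ hinj, Finset.card_univ, hcard]
    have hmem : ∀ i : Fin (n ^ 2), ∃ x : Fin n × Fin n, c x = S.orderEmbOfFin hscard i := by
      intro i
      have hi := Finset.orderEmbOfFin_mem S hscard i
      obtain ⟨x, -, hxx⟩ := Finset.mem_image.mp hi
      exact ⟨x, hxx⟩
    choose e hx using hmem
    have hmono : ∀ {i j : Fin (n ^ 2)}, i < j → c (e i) < c (e j) := by
      intro i j hij
      rw [hx, hx]
      exact (S.orderEmbOfFin hscard).lt_iff_lt.mpr hij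
    have key : ∀ j (hj : 2 * j < n ^ 2), 1 + j * (k + 1) ≤ c (e ⟨2 * j, hj⟩) := by
      intro j
      induction j with
      | zero => intro hj; simpa using hc1 (e ⟨0, hj⟩)
      | succ j ih =>
          intro hj
          have h0 : 2 * j < n ^ 2 := by omega
          have h1 : 2 * j + 1 < n ^ 2 := by omega
          have hu := ih h0
          set u := e ⟨2 * j, h0⟩ with hudef
          set v := e ⟨2 * j + 1, h1⟩ with hvdef
          set w := e ⟨2 * (j + 1), hj⟩ with hwdef
          have cuv : c u < c v := hmono (Fin.mk_lt_mk.mpr (by omega))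
          have cvw : c v < c w := hmono (Fin.mk_lt_mk.mpr (by omega))
          have huv : u ≠ v := fun h => by rw [h] at cuv; omega
          have hvw : v ≠ w := fun h => by rw [h] at cvw; omega
          have huw : u ≠ w := fun h => by rw [h] at cuv; omega
          have r1 := hc2 u v huv
          have r2 := hc2 v w hvw
          have r3 := hc2 u w huw
          have htri := torus_triple hn2 u v w
          have hcm : (cycleGraph n □ cycleGraph n).dist w u
              = (cycleGraph n □ cycleGraph n).dist u w := SimpleGraph.dist_comm
          have d1 : Nat.dist (c u) (c v) = c v - c u := Nat.dist_eq_sub_of_le cuv.le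
          have d2 : Nat.dist (c v) (c w) = c w - c v := Nat.dist_eq_sub_of_le cvw.le
          have d3 : Nat.dist (c u) (c w) = c w - c u :=
            Nat.dist_eq_sub_of_le (le_of_lt (lt_trans cuv cvw))
          rw [d1] at r1
          rw [d2] at r2
          rw [d3] at r3
          have hstep : c u + (k + 1) ≤ c w := by omega
          calc 1 + (j + 1) * (k + 1) = (1 + j * (k + 1)) + (k + 1) := by ring
            _ ≤ c u + (k + 1) := by omega
            _ ≤ c w := hstep
    have hlast : 2 * (2 * k * k + 2 * k) < n ^ 2 := by omega
    have hkey := key (2 * k * k + 2 * k) hlast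
    have hspan : c (e ⟨2 * (2 * k * k + 2 * k), hlast⟩) ≤ labelSpan c :=
      Finset.le_sup (Finset.mem_univ _)
    have hq : (n ^ 2 - 1) / 2 = 2 * k * k + 2 * k := by omega
    rw [hq]
    calc (2 * k * k + 2 * k) * (k + 1) + 1 = 1 + (2 * k * k + 2 * k) * (k + 1) := by ring
      _ ≤ _ := le_trans hkey hspan
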